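/- For the diffusion-based SSL model with nonnegative diffusion columns and one-hot labels, the reverse triangle inequality yields the lower bound ‖P_N − P_A‖₁ ≥ (f_A/|L̄ᶜ_S|) · | Σ_{n' ∈ A} ‖h_{n'}‖₁ − (K/(N−K)) · Σ_{n ∉ A} ‖h_n‖₁ |, where f_A = C(N−1, S−1). -/

import Mathlib

open Finset

/-- The entrywise L1 norm of a real `N × C` matrix: the sum of the absolute
values of its entries. -/
noncomputable def entryL1 {N C : ℕ} (Z : Matrix (Fin N) (Fin C) ℝ) : ℝ :=
  ∑ i, ∑ j, |Z i j|

section Aux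

variable {α : Type*} [DecidableEq α]

lemma count_mem_powersetCard (s : Finset α) (a : α) (ha : a ∈ s) (k : ℕ) (hk : 1 ≤ k) :
    ((powersetCard k s).filter (fun L => a ∈ L)).card = (s.card - 1).choose (k - 1) := by
  rw [show #s - 1 = (s.erase a).card from (card_erase_of_mem ha).symm, ← card_powersetCard (k-1) (s.erase a)]
  refine Finset.card_bij' (fun L _ => L.erase a) (fun M _ => insert a M) ?hi ?hj ?li ?ri
  case hi =>
    intro L hL
    simp only [mem_filter, mem_powersetCard] at hL
    simp only [mem_powersetCard]
    exact ⟨erase_subset_erase a hL.1.1, by rw [card_erase_of_mem hL.2, hL.1.2]⟩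
  case hj =>
    intro M hM
    simp only [mem_powersetCard] at hM
    have haM : a ∉ M := fun h => (mem_erase.mp (hM.1 h)).1 rfl
    simp only [mem_filter, mem_powersetCard]
    refine ⟨⟨?_, ?_⟩, mem_insert_self a M⟩
    · exact insert_subset ha (hM.1.trans (erase_subset a s))
    · rw [card_insert_of_notMem haM, hM.2]; omega
  · intro L hL
    simp only [mem_filter] at hL
    exact insert_erase hL.2
  · intro M hM
    simp only [mem_powersetCard] at hM
    have haM : a ∉ M := fun h => (mem_erase.mp (hM.1 h)).1 rfl
    exact erase_insert haM

lemma sum_sum_powersetCard (s : Finset α) (k : ℕ) (hk : 1 ≤ k) (w : α → ℝ) :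
    ∑ L ∈ powersetCard k s, ∑ n ∈ L, w n
      = ((s.card - 1).choose (k - 1) : ℝ) * ∑ n ∈ s, w n := by
  have : ∀ L ∈ powersetCard k s, ∑ n ∈ L, w n = ∑ n ∈ s, if n ∈ L then w n else 0 := by
    intro L hL
    rw [Finset.sum_ite_mem, Finset.inter_comm, Finset.inter_eq_left.mpr (mem_powersetCard.mp hL).1]
  rw [Finset.sum_congr rfl this, Finset.sum_comm, Finset.mul_sum]
  refine Finset.sum_congr rfl fun n hn => ?_
  rw [Finset.sum_ite, Finset.sum_const_zero, add_zero, Finset.sum_const,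
    count_mem_powersetCard s n hn k hk, nsmul_eq_mul]

lemma key_identity (a b q cc f cs k s nk : ℝ) (h1 : nk * q = cc * s)
    (h2 : (k + nk) * f = cs * s) (hcc : cc ≠ 0) (hm : cs - cc ≠ 0) (hnk : nk ≠ 0) :
    cc⁻¹ * (q * b) - (cs - cc)⁻¹ * (f * (a + b) - q * b)
      = f / (cs - cc) * (-(a - k / nk * b)) := by
  field_simp
  linear_combination (b * cs) * h1 - (cc * b) * h2

end Aux

/-- For the diffusion-based SSL model with nonnegative diffusion columns and
one-hot labels, the reverse triangle inequality yields the lower bound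
`‖P_N − P_A‖₁ ≥ (f_A/|L̄ᶜ_S|) · |Σ_{n'∈A} ‖h_{n'}‖₁ − (K/(N−K))·Σ_{n∉A} ‖h_n‖₁|`,
where `f_A = C(N−1, S−1)` and `‖h_n‖₁` is the sum of the entries of the `n`-th
column of `H`. -/
theorem graphsac_corollary1_lower_bound {N C K S : ℕ}
    (hK : 1 ≤ K) (hS : 1 ≤ S) (hSNK : S ≤ N - K)
    (A : Finset (Fin N)) (hA : A.card = K)
    (y : Fin N → Fin C → ℝ)
    (hy : ∀ n, ∃ c : Fin C, y n = Pi.single c 1)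
    (Y : Finset (Fin N) → Matrix (Fin N) (Fin C) ℝ)
    (hY : ∀ L, Y L = Matrix.of fun n c => if n ∈ L then y n c else 0)
    (H : Matrix (Fin N) (Fin N) ℝ)
    (hH : ∀ i n, 0 ≤ H i n)
    (g : Finset (Fin N) → Matrix (Fin N) (Fin C) ℝ)
    (hg : ∀ L, g L = H * Y L)
    (LS LbarS LbarcS : Finset (Finset (Fin N)))
    (hLS : LS = Finset.powersetCard S (Finset.univ : Finset (Fin N)))
    (hLbarS : LbarS = LS.filter (fun L => L ∩ A = ∅))
    (hLbarcS : LbarcS = LS \ LbarS)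
    (PN PA : Matrix (Fin N) (Fin C) ℝ)
    (hPN : PN = ((LbarS.card : ℝ))⁻¹ • ∑ L ∈ LbarS, g L)
    (hPA : PA = ((LbarcS.card : ℝ))⁻¹ • ∑ L ∈ LbarcS, g L) :
    entryL1 (PN - PA) ≥
      (((N - 1).choose (S - 1) : ℝ) / (LbarcS.card : ℝ)) *
        |(∑ n ∈ A, ∑ i, H i n) -
          ((K : ℝ) / ((N - K : ℕ) : ℝ)) * ∑ n ∈ Aᶜ, ∑ i, H i n| := by
  -- basic arithmetic facts
  have hKN : K < N := by omega
  have hNK1 : 1 ≤ N - K := le_trans hS hSNK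
  -- clean family is powersetCard of the complement
  have hclean : LbarS = Finset.powersetCard S Aᶜ := by
    ext L
    simp only [hLbarS, hLS, Finset.mem_filter, Finset.mem_powersetCard,
      Finset.subset_univ, true_and]
    constructor
    · rintro ⟨hc, hd⟩
      exact ⟨fun x hx => Finset.mem_compl.mpr fun hxA =>
        (Finset.notMem_empty x) (hd ▸ Finset.mem_inter.mpr ⟨hx, hxA⟩), hc⟩
    · rintro ⟨hsub, hc⟩
      refine ⟨hc, Finset.eq_empty_of_forall_notMem fun x hx => ?_⟩
      obtain ⟨h1, h2⟩ := Finset.mem_inter.mp hx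
      exact Finset.mem_compl.mp (hsub h1) h2
  have hAc : Aᶜ.card = N - K := by
    rw [Finset.card_compl, hA, Fintype.card_fin]
  have hcardClean : LbarS.card = (N - K).choose S := by
    rw [hclean, Finset.card_powersetCard, hAc]
  have hcardLS : LS.card = N.choose S := by
    rw [hLS, Finset.card_powersetCard, Finset.card_univ, Fintype.card_fin]
  have hsub : LbarS ⊆ LS := hLbarS ▸ Finset.filter_subset _ _
  have hcardM : LbarcS.card = N.choose S - (N - K).choose S := by
    rw [hLbarcS, Finset.card_sdiff_of_subset hsub, hcardLS, hcardClean]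
  -- entry sums of g L
  set w : Fin N → ℝ := fun n => ∑ i, H i n with hw
  have hyc : ∀ n, ∑ c, y n c = 1 := by
    intro n; obtain ⟨c0, hc⟩ := hy n
    rw [hc]; simp [Pi.single_apply]
  have hgL : ∀ L : Finset (Fin N), ∑ i, ∑ c, g L i c = ∑ n ∈ L, w n := by
    intro L
    have h1 : ∀ i : Fin N, ∑ c, g L i c = ∑ n ∈ L, H i n := by
      intro i
      simp only [hg, Matrix.mul_apply, hY, Matrix.of_apply]
      rw [Finset.sum_comm]
      calc ∑ n, ∑ c, H i n * (if n ∈ L then y n c else 0)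
          = ∑ n, (if n ∈ L then H i n else 0) := by
            refine Finset.sum_congr rfl fun n _ => ?_
            by_cases hn : n ∈ L
            · simp [hn, ← Finset.mul_sum, hyc n]
            · simp [hn]
        _ = ∑ n ∈ L, H i n := by
            rw [Finset.sum_ite_mem, Finset.univ_inter]
    calc ∑ i, ∑ c, g L i c = ∑ i, ∑ n ∈ L, H i n := by
          exact Finset.sum_congr rfl fun i _ => h1 i
      _ = ∑ n ∈ L, w n := Finset.sum_comm
  -- entry sums of PN and PA
  have hsumPN : ∑ i, ∑ c, PN i c
      = ((LbarS.card : ℝ))⁻¹ * ∑ L ∈ LbarS, ∑ n ∈ L, w n := by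
    rw [hPN]
    simp only [Matrix.smul_apply, Matrix.sum_apply, smul_eq_mul, ← Finset.mul_sum]
    congr 1
    calc ∑ i, ∑ c, ∑ L ∈ LbarS, g L i c
        = ∑ i, ∑ L ∈ LbarS, ∑ c, g L i c :=
          Finset.sum_congr rfl (fun i _ => Finset.sum_comm)
      _ = ∑ L ∈ LbarS, ∑ i, ∑ c, g L i c := Finset.sum_comm
      _ = ∑ L ∈ LbarS, ∑ n ∈ L, w n := Finset.sum_congr rfl (fun L _ => hgL L)
  have hsumPA : ∑ i, ∑ c, PA i c
      = ((LbarcS.card : ℝ))⁻¹ * ∑ L ∈ LbarcS, ∑ n ∈ L, w n := by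
    rw [hPA]
    simp only [Matrix.smul_apply, Matrix.sum_apply, smul_eq_mul, ← Finset.mul_sum]
    congr 1
    calc ∑ i, ∑ c, ∑ L ∈ LbarcS, g L i c
        = ∑ i, ∑ L ∈ LbarcS, ∑ c, g L i c :=
          Finset.sum_congr rfl (fun i _ => Finset.sum_comm)
      _ = ∑ L ∈ LbarcS, ∑ i, ∑ c, g L i c := Finset.sum_comm
      _ = ∑ L ∈ LbarcS, ∑ n ∈ L, w n := Finset.sum_congr rfl (fun L _ => hgL L)
  -- combinatorial sums
  set a : ℝ := ∑ n ∈ A, w n with ha'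
  set b : ℝ := ∑ n ∈ Aᶜ, w n with hb'
  have hTclean : ∑ L ∈ LbarS, ∑ n ∈ L, w n = ((N - K - 1).choose (S - 1) : ℝ) * b := by
    rw [hclean, sum_sum_powersetCard Aᶜ S hS w, hAc]
  have hTall : ∑ L ∈ LS, ∑ n ∈ L, w n = ((N - 1).choose (S - 1) : ℝ) * (a + b) := by
    rw [hLS, sum_sum_powersetCard univ S hS w, Finset.card_univ, Fintype.card_fin]
    congr 1
    rw [ha', hb', Finset.sum_add_sum_compl]
  have hTcont : ∑ L ∈ LbarcS, ∑ n ∈ L, w n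
      = ((N - 1).choose (S - 1) : ℝ) * (a + b) - ((N - K - 1).choose (S - 1) : ℝ) * b := by
    rw [hLbarcS, Finset.sum_sdiff_eq_sub hsub, hTall, hTclean]
  -- nat binomial identities
  have e1 : N - K - 1 + 1 = N - K := by omega
  have e2 : S - 1 + 1 = S := by omega
  have e3 : N - 1 + 1 = N := by omega
  have h1nat : (N - K) * (N - K - 1).choose (S - 1) = (N - K).choose S * S := by
    have := Nat.add_one_mul_choose_eq (N - K - 1) (S - 1)
    rwa [e1, e2] at this
  have h2nat : N * (N - 1).choose (S - 1) = N.choose S * S := by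
    have := Nat.add_one_mul_choose_eq (N - 1) (S - 1)
    rwa [e3, e2] at this
  have hfpos : 0 < (N - 1).choose (S - 1) := Nat.choose_pos (by omega)
  have hccpos : 0 < (N - K).choose S := Nat.choose_pos hSNK
  have hpascal : N.choose S = (N - 1).choose (S - 1) + (N - 1).choose S := by
    have := Nat.choose_succ_succ (N - 1) (S - 1)
    simp only [Nat.succ_eq_add_one] at this
    rwa [e3, e2] at this
  have hmono : (N - K).choose S ≤ (N - 1).choose S := Nat.choose_le_choose S (by omega)
  have hlt : (N - K).choose S < N.choose S := by omega
  have hmpos : 0 < LbarcS.card := by rw [hcardM]; omega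
  -- real versions
  have hmcast : ((LbarcS.card : ℕ) : ℝ) = (N.choose S : ℝ) - ((N - K).choose S : ℝ) := by
    rw [hcardM, Nat.cast_sub (le_of_lt hlt)]
  have hccne : (((N - K).choose S : ℕ) : ℝ) ≠ 0 :=
    (Nat.cast_pos.mpr hccpos).ne'
  have hmne : (N.choose S : ℝ) - ((N - K).choose S : ℝ) ≠ 0 :=
    sub_ne_zero.mpr (by exact_mod_cast hlt.ne')
  have hnkne : (((N - K : ℕ) : ℕ) : ℝ) ≠ 0 :=
    (Nat.cast_pos.mpr (show 0 < N - K by omega)).ne'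
  have h1 : ((N - K : ℕ) : ℝ) * ((N - K - 1).choose (S - 1) : ℝ)
      = ((N - K).choose S : ℝ) * (S : ℝ) := by exact_mod_cast h1nat
  have hKNK : (K : ℝ) + ((N - K : ℕ) : ℝ) = (N : ℝ) := by
    exact_mod_cast (show K + (N - K) = N by omega)
  have h2 : ((K : ℝ) + ((N - K : ℕ) : ℝ)) * ((N - 1).choose (S - 1) : ℝ)
      = (N.choose S : ℝ) * (S : ℝ) := by
    rw [hKNK]; exact_mod_cast h2nat
  -- key scalar identity
  have key : ∑ i, ∑ c, (PN - PA) i c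
      = (((N - 1).choose (S - 1) : ℝ) / (LbarcS.card : ℝ))
          * (-(a - ((K : ℝ) / ((N - K : ℕ) : ℝ)) * b)) := by
    simp only [Matrix.sub_apply, Finset.sum_sub_distrib]
    rw [hsumPN, hsumPA, hcardClean, hTclean, hTcont, hmcast]
    exact key_identity a b _ _ _ _ _ _ _ h1 h2 hccne hmne hnkne
  -- final chain
  rw [ge_iff_le]
  have hfm : 0 ≤ ((N - 1).choose (S - 1) : ℝ) / (LbarcS.card : ℝ) :=
    div_nonneg (Nat.cast_nonneg _) (Nat.cast_nonneg _)
  calc (((N - 1).choose (S - 1) : ℝ) / (LbarcS.card : ℝ))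
        * |a - ((K : ℝ) / ((N - K : ℕ) : ℝ)) * b|
      = |(((N - 1).choose (S - 1) : ℝ) / (LbarcS.card : ℝ))
          * (-(a - ((K : ℝ) / ((N - K : ℕ) : ℝ)) * b))| := by
        rw [abs_mul, abs_neg, abs_of_nonneg hfm]
    _ = |∑ i, ∑ c, (PN - PA) i c| := by rw [key]
    _ ≤ ∑ i, |∑ c, (PN - PA) i c| := Finset.abs_sum_le_sum_abs _ _
    _ ≤ ∑ i, ∑ c, |(PN - PA) i c| :=
        Finset.sum_le_sum fun i _ => Finset.abs_sum_le_sum_abs _ _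
    _ = entryL1 (PN - PA) := rfl
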